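/- Subspace convergence from matrix convergence (Davis–Kahan-type): let G_m be symmetric matrices with G_m → T̄ + σ² I, where T̄ ⪰ 0 has null space of dimension d and smallest nonzero eigenvalue ≥ δ > 0. Let V_m be any column-orthonormal matrix whose columns span the eigenspace of G_m for its d smallest eigenvalues, and let V̄ be column-orthonormal spanning Null(T̄). Then ‖(I − V̄ V̄ᵀ) V_m‖ → 0 as m → ∞. -/

import Mathlib

open Matrix Filter

/-- Frobenius norm of a real matrix. -/
noncomputable def frobNorm {p q : ℕ} (M : Matrix (Fin p) (Fin q) ℝ) : ℝ :=
  Real.sqrt (∑ i, ∑ j, (M i j) ^ 2)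

section Helpers

open Module.End

local notation "⟪" x ", " y "⟫" => @inner ℝ _ _ x y

private lemma symmetric_min_eig' {E : Type*} [NormedAddCommGroup E] [InnerProductSpace ℝ E]
    [FiniteDimensional ℝ E] [Nontrivial E] (T : E →ₗ[ℝ] E) (hT : T.IsSymmetric) :
    ∃ lam : ℝ, ∃ x₀ : E, x₀ ≠ 0 ∧ T x₀ = lam • x₀ ∧ ∀ x : E, lam * ⟪x, x⟫ ≤ ⟪T x, x⟫ := by
  set lam : ℝ := ⨅ x : { x : E // x ≠ 0 }, RCLike.re ⟪T x, x⟫ / ‖(x : E)‖ ^ 2 with hlam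
  have hev : HasEigenvalue T lam := hT.hasEigenvalue_iInf_of_finiteDimensional
  obtain ⟨x₀, hx₀mem, hx₀ne⟩ := Submodule.exists_mem_ne_zero_of_ne_bot hev
  have hTx₀ : T x₀ = lam • x₀ := by
    rw [Module.End.mem_eigenspace_iff] at hx₀mem; exact hx₀mem
  refine ⟨lam, x₀, hx₀ne, hTx₀, ?_⟩
  set Tc := LinearMap.toContinuousLinearMap T with hTc
  have hbdd : BddBelow (Set.range fun x : { x : E // x ≠ 0 } =>
      RCLike.re ⟪T x, x⟫ / ‖(x : E)‖ ^ 2) := by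
    refine ⟨-‖Tc‖, ?_⟩
    rintro r ⟨x, rfl⟩
    have hx : (0 : ℝ) < ‖(x : E)‖ ^ 2 := pow_pos (norm_pos_iff.mpr x.prop) 2
    rw [le_div_iff₀ hx]
    have h1 : |⟪T (x : E), (x : E)⟫| ≤ ‖Tc‖ * ‖(x:E)‖ ^ 2 := by
      calc |⟪T (x : E), (x : E)⟫| ≤ ‖T (x:E)‖ * ‖(x:E)‖ := abs_real_inner_le_norm _ _
        _ ≤ ‖Tc‖ * ‖(x:E)‖ * ‖(x:E)‖ := by
            have h2 : ‖T (x:E)‖ ≤ ‖Tc‖ * ‖(x:E)‖ := Tc.le_opNorm (x : E)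
            nlinarith [norm_nonneg (x:E)]
        _ = ‖Tc‖ * ‖(x:E)‖ ^ 2 := by ring
    have := neg_abs_le ⟪T (x : E), (x : E)⟫
    simp only [RCLike.re_to_real]
    nlinarith
  intro x
  rcases eq_or_ne x 0 with rfl | hx
  · simp
  · have hle : lam ≤ RCLike.re ⟪T x, x⟫ / ‖x‖ ^ 2 := ciInf_le hbdd ⟨x, hx⟩
    have hx2 : (0 : ℝ) < ‖x‖ ^ 2 := pow_pos (norm_pos_iff.mpr hx) 2
    rw [le_div_iff₀ hx2] at hle
    have hinner : ⟪x, x⟫ = ‖x‖ ^ 2 := real_inner_self_eq_norm_sq x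
    simp only [RCLike.re_to_real] at hle
    rw [hinner]
    linarith

private lemma matrix_min_eig_perp {q k : ℕ} (B : Matrix (Fin q) (Fin q) ℝ) (hB : B.IsSymm)
    (W : Matrix (Fin q) (Fin k) ℝ)
    (hinv : ∀ w : Fin q → ℝ, Wᵀ.mulVec w = 0 → Wᵀ.mulVec (B.mulVec w) = 0)
    (hne : ∃ w : Fin q → ℝ, w ≠ 0 ∧ Wᵀ.mulVec w = 0) :
    ∃ lam : ℝ, ∃ w₀ : Fin q → ℝ, w₀ ≠ 0 ∧ Wᵀ.mulVec w₀ = 0 ∧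
      B.mulVec w₀ = lam • w₀ ∧
      ∀ w : Fin q → ℝ, Wᵀ.mulVec w = 0 → lam * (w ⬝ᵥ w) ≤ w ⬝ᵥ B.mulVec w := by
  set e : EuclideanSpace ℝ (Fin q) ≃ₗ[ℝ] (Fin q → ℝ) :=
    WithLp.linearEquiv 2 ℝ (Fin q → ℝ) with he
  set S : Submodule ℝ (EuclideanSpace ℝ (Fin q)) :=
    LinearMap.ker ((Wᵀ.mulVecLin).comp e.toLinearMap) with hSdef
  have hmem : ∀ x : EuclideanSpace ℝ (Fin q), x ∈ S ↔ Wᵀ.mulVec (e x) = 0 := by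
    intro x
    simp [hSdef, LinearMap.mem_ker, mulVec_transpose]
  set T : EuclideanSpace ℝ (Fin q) →ₗ[ℝ] EuclideanSpace ℝ (Fin q) :=
    Matrix.toEuclideanLin B with hT
  have hTapp : ∀ x : EuclideanSpace ℝ (Fin q), e (T x) = B.mulVec (e x) := fun x => rfl
  have hinv' : ∀ x ∈ S, T x ∈ S := by
    intro x hx
    rw [hmem] at hx ⊢
    rw [hTapp]
    exact hinv _ hx
  have hS : S ≠ ⊥ := by
    obtain ⟨w, hw0, hwS⟩ := hne
    intro hbot
    have : e.symm w ∈ S := by rw [hmem]; simpa using hwS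
    rw [hbot, Submodule.mem_bot] at this
    exact hw0 (by simpa using congrArg e this)
  haveI : Nontrivial S := (Submodule.nontrivial_iff_ne_bot).mpr hS
  have hBH : B.IsHermitian := by
    rwa [Matrix.IsHermitian, conjTranspose_eq_transpose_of_trivial]
  have hsymE : T.IsSymmetric := Matrix.isHermitian_iff_isSymmetric.mp hBH
  have hsym : (T.restrict hinv').IsSymmetric := by
    intro x y
    have := hsymE (x : EuclideanSpace ℝ (Fin q)) (y : EuclideanSpace ℝ (Fin q))
    simpa [LinearMap.restrict_apply, Submodule.coe_inner] using this
  obtain ⟨lam, x₀, hx₀ne, hx₀eig, hbound⟩ := symmetric_min_eig' _ hsym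
  have hinner : ∀ x y : EuclideanSpace ℝ (Fin q), ⟪x, y⟫ = (e x) ⬝ᵥ (e y) := by
    intro x y
    simp only [PiLp.inner_apply, RCLike.inner_apply, starRingEnd_apply, star_trivial, dotProduct]
    exact Finset.sum_congr rfl fun i _ => mul_comm _ _
  refine ⟨lam, e (x₀ : EuclideanSpace ℝ (Fin q)), ?_, ?_, ?_, ?_⟩
  · intro h
    apply hx₀ne
    have : (x₀ : EuclideanSpace ℝ (Fin q)) = 0 := by
      simpa using congrArg e.symm h
    exact Subtype.ext this
  · exact (hmem _).mp x₀.2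
  · have := congrArg (Subtype.val) hx₀eig
    have h2 : T (x₀ : EuclideanSpace ℝ (Fin q)) = lam • (x₀ : EuclideanSpace ℝ (Fin q)) := this
    have := congrArg e h2
    rwa [hTapp, _root_.map_smul] at this
  · intro w hw
    have hwS : e.symm w ∈ S := by rw [hmem]; simpa using hw
    have := hbound ⟨e.symm w, hwS⟩
    rw [Submodule.coe_inner, Submodule.coe_inner] at this
    have hTw : ((T.restrict hinv') ⟨e.symm w, hwS⟩ : EuclideanSpace ℝ (Fin q)) =
        T (e.symm w) := rfl
    rw [hTw] at this
    rw [hinner, hinner] at this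
    simp only [LinearEquiv.apply_symm_apply] at this
    rw [hTapp] at this
    simp only [LinearEquiv.apply_symm_apply] at this
    calc lam * (w ⬝ᵥ w) ≤ (B.mulVec w) ⬝ᵥ w := this
      _ = w ⬝ᵥ B.mulVec w := dotProduct_comm _ _

private lemma dot_mulVec_t {q d : ℕ} (M : Matrix (Fin q) (Fin d) ℝ) (x : Fin q → ℝ)
    (c : Fin d → ℝ) : x ⬝ᵥ M.mulVec c = Mᵀ.mulVec x ⬝ᵥ c := by
  rw [dotProduct_mulVec, mulVec_transpose]

private lemma orth_cancel {q d : ℕ} (M : Matrix (Fin q) (Fin d) ℝ) (hM : Mᵀ * M = 1)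
    (c : Fin d → ℝ) : Mᵀ.mulVec (M.mulVec c) = c := by
  rw [mulVec_mulVec, hM, one_mulVec]

private lemma residual_props {q d : ℕ} (M : Matrix (Fin q) (Fin d) ℝ) (hM : Mᵀ * M = 1)
    (x : Fin q → ℝ) :
    Mᵀ.mulVec (x - M.mulVec (Mᵀ.mulVec x)) = 0 ∧
    (x - M.mulVec (Mᵀ.mulVec x)) ⬝ᵥ (x - M.mulVec (Mᵀ.mulVec x)) =
      x ⬝ᵥ x - (Mᵀ.mulVec x) ⬝ᵥ (Mᵀ.mulVec x) := by
  set p := Mᵀ.mulVec x with hp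
  constructor
  · rw [mulVec_sub, orth_cancel M hM]
    exact sub_self _
  · have h1 : x ⬝ᵥ M.mulVec p = p ⬝ᵥ p := by rw [dot_mulVec_t]
    have h2 : M.mulVec p ⬝ᵥ x = p ⬝ᵥ p := by rw [dotProduct_comm, h1]
    have h3 : M.mulVec p ⬝ᵥ M.mulVec p = p ⬝ᵥ p := by
      rw [dot_mulVec_t, orth_cancel M hM]
    rw [sub_dotProduct, dotProduct_sub, dotProduct_sub, h1, h2, h3]
    ring

private lemma dot_self_nonneg {n : ℕ} (x : Fin n → ℝ) : 0 ≤ x ⬝ᵥ x :=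
  Finset.sum_nonneg fun i _ => mul_self_nonneg (x i)

private lemma col_abs_le_one {q d : ℕ} (M : Matrix (Fin q) (Fin d) ℝ) (hM : Mᵀ * M = 1)
    (i : Fin q) (a : Fin d) : |M i a| ≤ 1 := by
  have h : ∑ j, M j a * M j a = 1 := by
    have := congrFun (congrFun hM a) a
    simpa [Matrix.mul_apply, Matrix.one_apply] using this
  rw [abs_le_one_iff_mul_self_le_one]
  calc M i a * M i a ≤ ∑ j, M j a * M j a :=
        Finset.single_le_sum (f := fun j => M j a * M j a)
          (fun j _ => mul_self_nonneg _) (Finset.mem_univ i)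
    _ = 1 := h

private lemma quad_bound {q : ℕ} (M : Matrix (Fin q) (Fin q) ℝ) (x : Fin q → ℝ)
    (hx : ∀ i, |x i| ≤ 1) : |x ⬝ᵥ M.mulVec x| ≤ ∑ i, ∑ j, |M i j| := by
  calc |x ⬝ᵥ M.mulVec x| = |∑ i, x i * ∑ j, M i j * x j| := rfl
    _ ≤ ∑ i, |x i * ∑ j, M i j * x j| := Finset.abs_sum_le_sum_abs _ _
    _ ≤ ∑ i, ∑ j, |M i j| := by
        refine Finset.sum_le_sum fun i _ => ?_
        rw [abs_mul]
        calc |x i| * |∑ j, M i j * x j| ≤ 1 * |∑ j, M i j * x j| := by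
              exact mul_le_mul_of_nonneg_right (hx i) (abs_nonneg _)
          _ = |∑ j, M i j * x j| := one_mul _
          _ ≤ ∑ j, |M i j * x j| := Finset.abs_sum_le_sum_abs _ _
          _ ≤ ∑ j, |M i j| := by
              refine Finset.sum_le_sum fun j _ => ?_
              rw [abs_mul]
              calc |M i j| * |x j| ≤ |M i j| * 1 :=
                    mul_le_mul_of_nonneg_left (hx j) (abs_nonneg _)
                _ = |M i j| := mul_one _

end Helpers

set_option maxHeartbeats 1000000

/-- Davis–Kahan-type subspace convergence: let `G m` be symmetric matrices
converging entrywise to `T̄ + σ² I`, where `T̄` is positive semidefinite with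
`d`-dimensional null space and smallest nonzero eigenvalue `≥ δ > 0`.  If the
columns of `V m` form an orthonormal basis of the eigenspace of `G m` for its
`d` smallest eigenvalues (eigenvalues `μ m`, minimal among all eigenvalues of
`G m` on the orthogonal complement), and `V̄` is a column-orthonormal basis of
`Null(T̄)`, then `‖(I − V̄ V̄ᵀ) (V m)‖ → 0`. -/
theorem bottom_eigenspace_convergence {q d : ℕ}
    (G : ℕ → Matrix (Fin q) (Fin q) ℝ) (Tbar : Matrix (Fin q) (Fin q) ℝ)
    (σ2 δ : ℝ) (hσ : 0 < σ2) (hδ : 0 < δ)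
    (hGsymm : ∀ m, (G m).IsSymm)
    (hGconv : ∀ a b : Fin q,
      Tendsto (fun m => G m a b) atTop
        (nhds ((Tbar + σ2 • (1 : Matrix (Fin q) (Fin q) ℝ)) a b)))
    (hTpsd : Tbar.PosSemidef)
    (hgap : ∀ (lam : ℝ) (v : Fin q → ℝ), v ≠ 0 → Tbar.mulVec v = lam • v →
      lam ≠ 0 → δ ≤ lam)
    (Vbar : Matrix (Fin q) (Fin d) ℝ)
    (hVbarOrth : Vbarᵀ * Vbar = 1)
    (hVbarNull : ∀ v : Fin q → ℝ,
      Tbar.mulVec v = 0 ↔ ∃ c : Fin d → ℝ, v = Vbar.mulVec c)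
    (V : ℕ → Matrix (Fin q) (Fin d) ℝ) (μ : ℕ → Fin d → ℝ)
    (hVorth : ∀ m, (V m)ᵀ * (V m) = 1)
    (hVeig : ∀ m (a : Fin d),
      (G m).mulVec (fun i => V m i a) = μ m a • (fun i => V m i a))
    (hVbottom : ∀ m (lam : ℝ) (w : Fin q → ℝ), w ≠ 0 →
      (G m).mulVec w = lam • w → (V m)ᵀ.mulVec w = 0 → ∀ a, μ m a ≤ lam) :
    Tendsto (fun m =>
        frobNorm ((1 - Vbar * Vbarᵀ) * V m)) atTop (nhds 0) := by
  classical
  set A := Tbar + σ2 • (1 : Matrix (Fin q) (Fin q) ℝ) with hA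
  set η : ℕ → ℝ := fun m => ∑ i, ∑ j, |G m i j - A i j| with hηdef
  set ε : ℕ → ℝ := fun m => ∑ a : Fin d, ∑ i : Fin q, ((((1 - Vbar * Vbarᵀ) * V m : Matrix (Fin q) (Fin d) ℝ)) i a) ^ 2 with hεdef
  set u : Fin d → Fin q → ℝ := fun b i => Vbar i b with hudef
  -- Tbar kills Vbar
  have hVbsingle : ∀ b, Vbar.mulVec (Pi.single b 1) = u b := by
    intro b; funext i
    simp [Matrix.mulVec, dotProduct, Pi.single_apply, hudef]
  have hTu : ∀ b, Tbar.mulVec (u b) = 0 := by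
    intro b
    exact (hVbarNull (u b)).mpr ⟨Pi.single b 1, (hVbsingle b).symm⟩
  have hTV : Tbar * Vbar = 0 := by
    ext i b
    have := congrFun (hTu b) i
    simpa [Matrix.mul_apply, Matrix.mulVec, dotProduct, hudef] using this
  have hTsymm : Tbarᵀ = Tbar := by
    rw [← conjTranspose_eq_transpose_of_trivial]
    exact hTpsd.1
  have hVbT : Vbarᵀ * Tbar = 0 := by
    have h := congrArg Matrix.transpose hTV
    rwa [Matrix.transpose_mul, hTsymm, Matrix.transpose_zero] at h
  -- coercivity of Tbar on the complement of its null space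
  have hinvT : ∀ x : Fin q → ℝ, Vbarᵀ.mulVec x = 0 →
      Vbarᵀ.mulVec (Tbar.mulVec x) = 0 := by
    intro x _
    rw [mulVec_mulVec, hVbT, zero_mulVec]
  have Hdelta : ∀ x : Fin q → ℝ, Vbarᵀ.mulVec x = 0 →
      δ * (x ⬝ᵥ x) ≤ x ⬝ᵥ Tbar.mulVec x := by
    by_cases hex : ∃ x : Fin q → ℝ, x ≠ 0 ∧ Vbarᵀ.mulVec x = 0
    · have hTsym' : Tbar.IsSymm := hTsymm
      obtain ⟨lam, w₀, hw₀ne, hw₀perp, hw₀eig, hb⟩ :=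
        matrix_min_eig_perp Tbar hTsym' Vbar hinvT hex
      have hlamne : lam ≠ 0 := by
        intro h0
        rw [h0, zero_smul] at hw₀eig
        obtain ⟨c, hc⟩ := (hVbarNull w₀).mp hw₀eig
        have : Vbarᵀ.mulVec w₀ = c := by rw [hc, orth_cancel Vbar hVbarOrth]
        rw [hw₀perp] at this
        apply hw₀ne
        rw [hc, ← this, mulVec_zero]
      have hδlam : δ ≤ lam := hgap lam w₀ hw₀ne hw₀eig hlamne
      intro x hx
      calc δ * (x ⬝ᵥ x) ≤ lam * (x ⬝ᵥ x) :=
            mul_le_mul_of_nonneg_right hδlam (dot_self_nonneg x)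
        _ ≤ x ⬝ᵥ Tbar.mulVec x := hb x hx
    · push_neg at hex
      intro x hx
      have hx0 : x = 0 := by
        by_contra h
        exact hex x h hx
      subst hx0
      simp
  -- η → 0
  have hηconv : Tendsto η atTop (nhds 0) := by
    rw [show (0 : ℝ) = ∑ _i : Fin q, ∑ _j : Fin q, (0 : ℝ) by simp]
    refine tendsto_finset_sum _ fun i _ => tendsto_finset_sum _ fun j _ => ?_
    have h1 : Tendsto (fun m => G m i j - A i j) atTop (nhds 0) := by
      have := (hGconv i j).sub (tendsto_const_nhds (x := A i j))
      simpa using this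
    simpa using h1.abs
  -- the key inequality
  have key : ∀ m, δ * ε m ≤ 2 * (d : ℝ) * η m := by
    intro m
    set Vm := V m with hVmdef
    set Gm := G m with hGmdef
    set μm := μ m with hμmdef
    set v : Fin d → Fin q → ℝ := fun a i => Vm i a with hvdef
    set rr : Fin d → Fin d → ℝ := fun a => Vbarᵀ.mulVec (v a) with hrdef
    set cc : Fin d → ℝ := fun a => rr a ⬝ᵥ rr a with hccdef
    set w : Fin d → Fin q → ℝ := fun a => v a - Vbar.mulVec (rr a) with hwdef
    have hvv : ∀ a, v a ⬝ᵥ v a = 1 := by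
      intro a
      have := congrFun (congrFun (hVorth m) a) a
      simpa [Matrix.mul_apply, dotProduct, Matrix.one_apply] using this
    have huu : ∀ b, u b ⬝ᵥ u b = 1 := by
      intro b
      have := congrFun (congrFun hVbarOrth b) b
      simpa [Matrix.mul_apply, dotProduct, Matrix.one_apply, hudef] using this
    -- the columns of (1 - Vbar Vbarᵀ) Vm
    have hcolfun : ∀ a, (fun i : Fin q => ((1 - Vbar * Vbarᵀ) * Vm : Matrix (Fin q) (Fin d) ℝ) i a) = w a := by
      intro a
      have h1 : (fun i : Fin q => ((1 - Vbar * Vbarᵀ) * Vm : Matrix (Fin q) (Fin d) ℝ) i a) =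
          (1 - Vbar * Vbarᵀ).mulVec (v a) := by
        funext i
        simp [Matrix.mul_apply, Matrix.mulVec, dotProduct, hvdef]
      rw [h1, sub_mulVec, one_mulVec, ← mulVec_mulVec]
    have hepscol : ∀ a, ∑ i : Fin q, ((((1 - Vbar * Vbarᵀ) * Vm : Matrix (Fin q) (Fin d) ℝ)) i a) ^ 2 = 1 - cc a := by
      intro a
      have h1 : ∑ i : Fin q, ((((1 - Vbar * Vbarᵀ) * Vm : Matrix (Fin q) (Fin d) ℝ)) i a) ^ 2 = w a ⬝ᵥ w a := by
        rw [dotProduct]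
        refine Finset.sum_congr rfl fun i _ => ?_
        rw [pow_two, congrFun (hcolfun a) i]
      rw [h1, hwdef]
      have := (residual_props Vbar hVbarOrth (v a)).2
      simp only [hrdef, hccdef]
      rw [this, hvv a]
    have hccle : ∀ a, 0 ≤ 1 - cc a := by
      intro a
      rw [← hepscol a]
      exact Finset.sum_nonneg fun i _ => sq_nonneg _
    have hεm : ε m = ∑ a, (1 - cc a) := by
      rw [hεdef]
      exact Finset.sum_congr rfl fun a _ => hepscol a
    -- lower bound pieces
    have hGv : ∀ a, Gm.mulVec (v a) = μm a • v a := fun a => hVeig m a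
    have hμeq : ∀ a, μm a = v a ⬝ᵥ Gm.mulVec (v a) := by
      intro a
      rw [hGv a, dotProduct_smul, smul_eq_mul, hvv a, mul_one]
    have hAv : ∀ x : Fin q → ℝ,
        x ⬝ᵥ A.mulVec x = x ⬝ᵥ Tbar.mulVec x + σ2 * (x ⬝ᵥ x) := by
      intro x
      rw [hA, add_mulVec, smul_mulVec, one_mulVec, dotProduct_add,
        dotProduct_smul, smul_eq_mul]
    have habsG : ∀ x : Fin q → ℝ, (∀ i, |x i| ≤ 1) →
        x ⬝ᵥ A.mulVec x - η m ≤ x ⬝ᵥ Gm.mulVec x ∧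
        x ⬝ᵥ Gm.mulVec x ≤ x ⬝ᵥ A.mulVec x + η m := by
      intro x hx
      have h := quad_bound (Gm - A) x hx
      have hent : ∑ i, ∑ j, |(Gm - A) i j| = η m := by
        rw [hηdef]
        exact Finset.sum_congr rfl fun i _ => Finset.sum_congr rfl fun j _ => by
          rw [Matrix.sub_apply]
      rw [hent] at h
      have hdec : x ⬝ᵥ (Gm - A).mulVec x = x ⬝ᵥ Gm.mulVec x - x ⬝ᵥ A.mulVec x := by
        rw [sub_mulVec, dotProduct_sub]
      rw [hdec] at h
      have := abs_le.mp h
      constructor <;> linarith [this.1, this.2]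
    have hVme : ∀ i a, |Vm i a| ≤ 1 := fun i a => col_abs_le_one Vm (hVorth m) i a
    have hVbe : ∀ i b, |Vbar i b| ≤ 1 := fun i b => col_abs_le_one Vbar hVbarOrth i b
    have hTbarlow : ∀ a, δ * (1 - cc a) ≤ v a ⬝ᵥ Tbar.mulVec (v a) := by
      intro a
      obtain ⟨hw0, hww⟩ := residual_props Vbar hVbarOrth (v a)
      have hwa0 : Vbarᵀ.mulVec (w a) = 0 := hw0
      have hwwa : w a ⬝ᵥ w a = 1 - cc a := by
        rw [hwdef]; simp only [hrdef, hccdef]; rw [hww, hvv a]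
      have hEv : Tbar.mulVec (Vbar.mulVec (rr a)) = 0 := by
        rw [mulVec_mulVec, hTV, zero_mulVec]
      have hsplit : v a ⬝ᵥ Tbar.mulVec (v a) = w a ⬝ᵥ Tbar.mulVec (w a) := by
        have hv : v a = Vbar.mulVec (rr a) + w a := by
          simp [hwdef]
        calc v a ⬝ᵥ Tbar.mulVec (v a)
            = (Vbar.mulVec (rr a) + w a) ⬝ᵥ Tbar.mulVec (Vbar.mulVec (rr a) + w a) := by
              rw [← hv]
          _ = (Vbar.mulVec (rr a) + w a) ⬝ᵥ Tbar.mulVec (w a) := by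
              rw [mulVec_add, hEv, zero_add]
          _ = Vbar.mulVec (rr a) ⬝ᵥ Tbar.mulVec (w a) + w a ⬝ᵥ Tbar.mulVec (w a) := by
              rw [add_dotProduct]
          _ = w a ⬝ᵥ Tbar.mulVec (w a) := by
              rw [dot_mulVec_t, hTsymm, hEv, zero_dotProduct, zero_add]
      rw [hsplit, ← hwwa]
      exact Hdelta (w a) hwa0
    have hlow : σ2 * (d : ℝ) + δ * ε m - (d : ℝ) * η m ≤ ∑ a, μm a := by
      have h1 : ∀ a, σ2 + δ * (1 - cc a) - η m ≤ μm a := by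
        intro a
        have hVa : ∀ i, |v a i| ≤ 1 := fun i => hVme i a
        have h2 := (habsG (v a) hVa).1
        rw [hAv (v a), hvv a] at h2
        have h3 := hTbarlow a
        rw [hμeq a]
        nlinarith
      calc σ2 * (d : ℝ) + δ * ε m - (d : ℝ) * η m
          = ∑ _a : Fin d, σ2 + δ * (∑ a, (1 - cc a)) - ∑ _a : Fin d, η m := by
            rw [hεm]; simp [Finset.sum_const, Finset.card_univ, mul_comm]
        _ = ∑ a : Fin d, (σ2 + δ * (1 - cc a) - η m) := by
            rw [Finset.mul_sum, Finset.sum_sub_distrib, Finset.sum_add_distrib]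
        _ ≤ ∑ a, μm a := Finset.sum_le_sum fun a _ => h1 a
    -- upper bound pieces
    set D := Matrix.diagonal μm with hDdef
    have hGV : Gm * Vm = Vm * D := by
      ext i a
      have h := congrFun (hGv a) i
      rw [Matrix.mul_diagonal, Matrix.mul_apply]
      simp only [Matrix.mulVec, dotProduct, Pi.smul_apply, smul_eq_mul, hvdef] at h
      rw [h, mul_comm]
    have hinvG : ∀ x : Fin q → ℝ, Vmᵀ.mulVec x = 0 →
        Vmᵀ.mulVec (Gm.mulVec x) = 0 := by
      intro x hx
      have hVGm : Vmᵀ * Gm = D * Vmᵀ := by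
        have h1 := congrArg Matrix.transpose hGV
        rwa [Matrix.transpose_mul, Matrix.transpose_mul, (hGsymm m),
          Matrix.diagonal_transpose] at h1
      rw [mulVec_mulVec, hVGm, ← mulVec_mulVec, hx, mulVec_zero]
    set p : Fin d → Fin d → ℝ := fun b => Vmᵀ.mulVec (u b) with hpdef
    set wB : Fin d → Fin q → ℝ := fun b => u b - Vm.mulVec (p b) with hwBdef
    have hwBperp : ∀ b, Vmᵀ.mulVec (wB b) = 0 :=
      fun b => (residual_props Vm (hVorth m) (u b)).1
    have hwBnorm : ∀ b, wB b ⬝ᵥ wB b = 1 - p b ⬝ᵥ p b := by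
      intro b
      have := (residual_props Vm (hVorth m) (u b)).2
      rw [hwBdef]; simp only [hpdef]; rw [this, huu b]
    have hrp : ∀ a b, rr a b = p b a := by
      intro a b
      simp only [hrdef, hpdef, Matrix.mulVec, dotProduct, Matrix.transpose_apply,
        hvdef, hudef]
      exact Finset.sum_congr rfl fun i _ => mul_comm _ _
    have hdecomp : ∀ b, u b ⬝ᵥ Gm.mulVec (u b) =
        (∑ a, μm a * (p b a) ^ 2) + wB b ⬝ᵥ Gm.mulVec (wB b) := by
      intro b
      have hDp : D.mulVec (p b) = fun a => μm a * p b a := by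
        funext a
        rw [mulVec_diagonal]
      have hx : Gm.mulVec (Vm.mulVec (p b)) = Vm.mulVec (fun a => μm a * p b a) := by
        rw [mulVec_mulVec, hGV, ← mulVec_mulVec, hDp]
      have hu : Vm.mulVec (p b) + wB b = u b := by
        rw [hwBdef]; simp
      have t11 : Vm.mulVec (p b) ⬝ᵥ Vm.mulVec (fun a => μm a * p b a) =
          ∑ a, μm a * (p b a) ^ 2 := by
        rw [dot_mulVec_t, orth_cancel Vm (hVorth m), dotProduct]
        exact Finset.sum_congr rfl fun a _ => by ring
      have t12 : Vm.mulVec (p b) ⬝ᵥ Gm.mulVec (wB b) = 0 := by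
        rw [dot_mulVec_t, (hGsymm m), hx, dotProduct_comm, dot_mulVec_t,
          hwBperp b, zero_dotProduct]
      have t21 : wB b ⬝ᵥ Gm.mulVec (Vm.mulVec (p b)) = 0 := by
        rw [hx, dot_mulVec_t, hwBperp b, zero_dotProduct]
      calc u b ⬝ᵥ Gm.mulVec (u b)
          = (Vm.mulVec (p b) + wB b) ⬝ᵥ Gm.mulVec (Vm.mulVec (p b) + wB b) := by
            rw [hu]
        _ = (∑ a, μm a * (p b a) ^ 2) + wB b ⬝ᵥ Gm.mulVec (wB b) := by
            rw [mulVec_add, add_dotProduct, dotProduct_add, dotProduct_add,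
              t12, t21, hx, t11, add_zero, zero_add]
    have hlink : ∑ a, (1 - cc a) = ∑ b, wB b ⬝ᵥ wB b := by
      have h1 : ∑ a, cc a = ∑ b, p b ⬝ᵥ p b := by
        simp only [hccdef, dotProduct]
        rw [Finset.sum_comm]
        exact Finset.sum_congr rfl fun b _ => Finset.sum_congr rfl fun a _ => by
          rw [hrp a b]
      simp only [hwBnorm]
      rw [Finset.sum_sub_distrib, Finset.sum_sub_distrib, h1]
    have Hsum : ∑ a, μm a * (1 - cc a) ≤ ∑ b, wB b ⬝ᵥ Gm.mulVec (wB b) := by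
      by_cases hex : ∃ x : Fin q → ℝ, x ≠ 0 ∧ Vmᵀ.mulVec x = 0
      · obtain ⟨lam, w₀, hw₀ne, hw₀perp, hw₀eig, hb⟩ :=
          matrix_min_eig_perp Gm (hGsymm m) Vm hinvG hex
        have hμlam : ∀ a, μm a ≤ lam := hVbottom m lam w₀ hw₀ne hw₀eig hw₀perp
        calc ∑ a, μm a * (1 - cc a) ≤ ∑ a, lam * (1 - cc a) :=
              Finset.sum_le_sum fun a _ =>
                mul_le_mul_of_nonneg_right (hμlam a) (hccle a)
          _ = lam * ∑ a, (1 - cc a) := by rw [Finset.mul_sum]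
          _ = ∑ b, lam * (wB b ⬝ᵥ wB b) := by rw [hlink, Finset.mul_sum]
          _ ≤ ∑ b, wB b ⬝ᵥ Gm.mulVec (wB b) :=
              Finset.sum_le_sum fun b _ => hb _ (hwBperp b)
      · push_neg at hex
        have hz : ∀ b, wB b = 0 := by
          intro b
          by_contra h
          exact hex (wB b) h (hwBperp b)
        have hcc0 : ∑ a, (1 - cc a) = 0 := by
          rw [hlink]
          exact Finset.sum_eq_zero fun b _ => by rw [hz b, zero_dotProduct]
        have hcc0' : ∀ a ∈ Finset.univ, (1 : ℝ) - cc a = 0 :=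
          (Finset.sum_eq_zero_iff_of_nonneg fun a _ => hccle a).mp hcc0
        have hL : ∑ a, μm a * (1 - cc a) = 0 :=
          Finset.sum_eq_zero fun a ha => by rw [hcc0' a ha, mul_zero]
        have hR : ∑ b, wB b ⬝ᵥ Gm.mulVec (wB b) = 0 :=
          Finset.sum_eq_zero fun b _ => by rw [hz b, zero_dotProduct]
        rw [hL, hR]
    have hupp : ∑ a, μm a ≤ σ2 * (d : ℝ) + (d : ℝ) * η m := by
      have e1 : ∑ b, u b ⬝ᵥ Gm.mulVec (u b) =
          (∑ a, μm a * cc a) + ∑ b, wB b ⬝ᵥ Gm.mulVec (wB b) := by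
        rw [Finset.sum_congr rfl fun b _ => hdecomp b, Finset.sum_add_distrib]
        congr 1
        rw [Finset.sum_comm]
        refine Finset.sum_congr rfl fun a _ => ?_
        rw [hccdef]
        simp only [dotProduct]
        rw [Finset.mul_sum]
        exact Finset.sum_congr rfl fun b _ => by rw [hrp a b]; ring
      have e2 : ∑ a, μm a = (∑ a, μm a * cc a) + ∑ a, μm a * (1 - cc a) := by
        rw [← Finset.sum_add_distrib]
        exact Finset.sum_congr rfl fun a _ => by ring
      have h1 : ∑ a, μm a ≤ ∑ b, u b ⬝ᵥ Gm.mulVec (u b) := by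
        rw [e2, e1]
        exact add_le_add (le_refl _) Hsum
      have h2 : ∀ b, u b ⬝ᵥ Gm.mulVec (u b) ≤ σ2 + η m := by
        intro b
        have hub : ∀ i, |u b i| ≤ 1 := fun i => hVbe i b
        have h3 := (habsG (u b) hub).2
        rw [hAv (u b), huu b, hTu b, dotProduct_zero] at h3
        linarith
      calc ∑ a, μm a ≤ ∑ b, u b ⬝ᵥ Gm.mulVec (u b) := h1
        _ ≤ ∑ _b : Fin d, (σ2 + η m) := Finset.sum_le_sum fun b _ => h2 b
        _ = σ2 * (d : ℝ) + (d : ℝ) * η m := by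
            rw [Finset.sum_const, Finset.card_univ, Fintype.card_fin, nsmul_eq_mul]
            ring
    nlinarith [hlow, hupp]
  -- conclude
  have hεnonneg : ∀ m, 0 ≤ ε m := fun m =>
    Finset.sum_nonneg fun a _ => Finset.sum_nonneg fun i _ => sq_nonneg _
  have hεle : ∀ m, ε m ≤ 2 * (d : ℝ) * η m / δ := by
    intro m
    rw [le_div_iff₀ hδ]
    have := key m
    nlinarith
  have hgconv : Tendsto (fun m => 2 * (d : ℝ) * η m / δ) atTop (nhds 0) := by
    have h1 := (hηconv.const_mul (2 * (d : ℝ))).div_const δ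
    simpa using h1
  have hεconv : Tendsto ε atTop (nhds 0) := squeeze_zero hεnonneg hεle hgconv
  have hfr : (fun m => frobNorm ((1 - Vbar * Vbarᵀ) * V m)) =
      fun m => Real.sqrt (ε m) := by
    funext m
    rw [frobNorm, hεdef]
    congr 1
    exact Finset.sum_comm
  rw [hfr]
  have := hεconv.sqrt
  simpa [Real.sqrt_zero] using this
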